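/- Let (X,μ) be a measure space, q₀ < q < q₁ exponents in [1,∞), and suppose a measurable function φ and a family of functions (g_Q)_{Q ball} satisfy the John–Nirenberg-type estimate μ({x ∈ Q : |g_Q(x)| > λ N}) ≤ ρ₁ μ(Q)(e^{-ρ₂ λ} + λ^{-q₁}) for every ball Q and λ > 0, where N := sup_Q (μ(Q)^{-1} ∫_Q |g_Q|^{q₀} dμ)^{1/q₀}. Then there is a constant C = C(ρ₁, ρ₂, q, q₁) such that sup_Q (μ(Q)^{-1} ∫_Q |g_Q|^q dμ)^{1/q} ≤ C N. In particular, under the John–Nirenberg inequality, the BMO_q norms for q ∈ (q₀, q₁) are all equivalent. -/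

import Mathlib

open MeasureTheory Filter
open scoped ENNReal NNReal Topology

private lemma jn_rpow_pow (y : ℝ) (n : ℕ) : ((2:ℝ)^n) ^ y = ((2:ℝ)^y)^n := by
  rw [← Real.rpow_natCast 2 n, ← Real.rpow_natCast ((2:ℝ)^y) n,
    ← Real.rpow_mul (by norm_num), ← Real.rpow_mul (by norm_num), mul_comm]

private lemma jn_exp_le (x : ℝ) (hx : 0 < x) (m : ℕ) :
    Real.exp (-x) ≤ m.factorial / x ^ m := by
  have h1 : x ^ m / m.factorial ≤ Real.exp x :=
    calc x ^ m / m.factorial ≤ ∑ i ∈ Finset.range (m+1), x ^ i / i.factorial :=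
          Finset.single_le_sum (f := fun i => x ^ i / (i.factorial:ℝ))
            (fun i _ => by positivity) (Finset.self_mem_range_succ m)
      _ ≤ Real.exp x := Real.sum_le_exp_of_nonneg hx.le _
  rw [Real.exp_neg, inv_le_comm₀ (Real.exp_pos x) (by positivity), inv_div]
  exact h1

/-- The coefficient sequence in the series bound. -/
private noncomputable def jnA (ρ₂ q q₁ : ℝ) (n : ℕ) : ℝ :=
  ((2:ℝ)^(n+1))^q * (Real.exp (-(ρ₂ * 2^n)) + ((2:ℝ)^n) ^ (-q₁))

private lemma jnA_nonneg (ρ₂ q q₁ : ℝ) (n : ℕ) : 0 ≤ jnA ρ₂ q q₁ n := by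
  unfold jnA; positivity

private lemma jn_summable (ρ₂ q q₁ : ℝ) (hρ₂ : 0 < ρ₂) (hq : 0 < q) (hqq₁ : q < q₁) :
    Summable (jnA ρ₂ q q₁) := by
  set m : ℕ := ⌈q⌉₊ + 2 with hm_def
  have hqm : q < (m:ℝ) := by
    have h1 : q ≤ (⌈q⌉₊ : ℝ) := Nat.le_ceil q
    have h2 : ((⌈q⌉₊:ℕ) : ℝ) < (m:ℝ) := by rw [hm_def]; push_cast; linarith
    linarith
  have key : ∀ n : ℕ, jnA ρ₂ q q₁ n
      = ((2:ℝ)^(n+1))^q * Real.exp (-(ρ₂ * 2^n))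
        + (2:ℝ)^q * (((2:ℝ)^(q - q₁))^n) := by
    intro n
    have h2n : (0:ℝ) < 2^n := by positivity
    unfold jnA
    rw [mul_add]
    congr 1
    rw [pow_succ, Real.mul_rpow h2n.le (by norm_num), ← jn_rpow_pow,
      show ((2:ℝ)^n)^q * 2^q * ((2:ℝ)^n)^(-q₁) = 2^q * (((2:ℝ)^n)^q * ((2:ℝ)^n)^(-q₁)) from
        by ring, ← Real.rpow_add h2n, ← sub_eq_add_neg]
  -- summability of the exponential part
  have hb : ∀ n : ℕ, ((2:ℝ)^(n+1))^q * Real.exp (-(ρ₂ * 2^n))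
      ≤ ((2:ℝ)^q * (m.factorial / ρ₂^m)) * ((2:ℝ)^(q-(m:ℝ)))^n := by
    intro n
    have h2n : (0:ℝ) < 2^n := by positivity
    have he := jn_exp_le (ρ₂ * 2^n) (by positivity) m
    have hne1 : ((2:ℝ)^n)^m ≠ 0 := by positivity
    have hne2 : ρ₂^m ≠ 0 := by positivity
    calc ((2:ℝ)^(n+1))^q * Real.exp (-(ρ₂ * 2^n))
        ≤ ((2:ℝ)^(n+1))^q * ((m.factorial : ℝ) / (ρ₂ * 2^n)^m) :=
          mul_le_mul_of_nonneg_left he (Real.rpow_nonneg (by positivity) _)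
      _ = ((2:ℝ)^q * (m.factorial / ρ₂^m)) * ((2:ℝ)^(q-(m:ℝ)))^n := by
          rw [← jn_rpow_pow, pow_succ, Real.mul_rpow h2n.le (by norm_num),
            Real.rpow_sub h2n, Real.rpow_natCast, mul_pow]
          field_simp
  have hgeo1 : Summable (fun n : ℕ => ((2:ℝ)^q * (m.factorial / ρ₂^m)) * ((2:ℝ)^(q-(m:ℝ)))^n) :=
    (summable_geometric_of_lt_one (Real.rpow_nonneg (by norm_num) _)
      (Real.rpow_lt_one_of_one_lt_of_neg (by norm_num) (by linarith))).mul_left _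
  have h1 : Summable (fun n : ℕ => ((2:ℝ)^(n+1))^q * Real.exp (-(ρ₂ * 2^n))) :=
    Summable.of_nonneg_of_le (fun n => by positivity) hb hgeo1
  have h2 : Summable (fun n : ℕ => (2:ℝ)^q * (((2:ℝ)^(q - q₁))^n)) :=
    (summable_geometric_of_lt_one (Real.rpow_nonneg (by norm_num) _)
      (Real.rpow_lt_one_of_one_lt_of_neg (by norm_num) (by linarith))).mul_left _
  exact (h1.add h2).congr fun n => (key n).symm

/-- a John–Nirenberg-type distributional estimate
`μ({x ∈ Q : |g_Q| > λN}) ≤ ρ₁ μ(Q)(e^{-ρ₂λ} + λ^{-q₁})` self-improves: for any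
`q₀ < q < q₁` there is `C = C(ρ₁,ρ₂,q,q₁)` with
`sup_Q (μ(Q)⁻¹ ∫_Q |g_Q|^q)^{1/q} ≤ C N`; in particular the `BMO_q` norms for
`q ∈ (q₀,q₁)` are equivalent. -/
theorem john_nirenberg_self_improvement
    (ρ₁ ρ₂ q₀ q q₁ : ℝ) (hρ₁ : 0 < ρ₁) (hρ₂ : 0 < ρ₂)
    (hq₀ : 1 ≤ q₀) (hq₀q : q₀ < q) (hqq₁ : q < q₁) :
    ∃ C > (0 : ℝ),
      ∀ {X : Type} [MeasurableSpace X] (μ : Measure X)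
        {ι : Type} (Q : ι → Set X) (g : ι → X → ℝ) (N : ℝ), 0 ≤ N →
        (∀ i, MeasurableSet (Q i)) →
        (∀ i, 0 < μ (Q i) ∧ μ (Q i) < ⊤) →
        -- `N` bounds the `BMO_{q₀}`-type norm
        (∀ i, ((μ (Q i))⁻¹ * ∫⁻ x in Q i, (‖g i x‖₊ : ℝ≥0∞) ^ q₀ ∂μ) ^ (1/q₀)
            ≤ ENNReal.ofReal N) →
        -- the John–Nirenberg distributional estimate
        (∀ i, ∀ l : ℝ, 0 < l →
          μ {x ∈ Q i | l * N < |g i x|}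
            ≤ ENNReal.ofReal ρ₁ * μ (Q i) *
                (ENNReal.ofReal (Real.exp (-(ρ₂ * l))) + ENNReal.ofReal (l ^ (-q₁)))) →
        ∀ i, ((μ (Q i))⁻¹ * ∫⁻ x in Q i, (‖g i x‖₊ : ℝ≥0∞) ^ q ∂μ) ^ (1/q)
            ≤ ENNReal.ofReal (C * N) := by
  classical
  have hq : 0 < q := by linarith
  have hq₁pos : 0 < q₁ := by linarith
  have ha0 : ∀ n, 0 ≤ jnA ρ₂ q q₁ n := jnA_nonneg ρ₂ q q₁
  have hsum : Summable (jnA ρ₂ q q₁) := jn_summable ρ₂ q q₁ hρ₂ hq hqq₁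
  set S : ℝ := ∑' n, jnA ρ₂ q q₁ n with hS_def
  have hS0 : 0 ≤ S := tsum_nonneg ha0
  have hK : 0 < 1 + ρ₁ * S := by nlinarith
  refine ⟨(1 + ρ₁ * S) ^ (1/q), Real.rpow_pos_of_pos hK _, ?_⟩
  intro X _ μ ι Q g N hN hQm hQfin hBMO hJN i
  obtain ⟨hQ0, hQtop⟩ := hQfin i
  -- level sets and their measurable hulls
  set A : ℕ → Set X := fun n => {x ∈ Q i | (2:ℝ)^n * N < |g i x|} with hA_def
  set T : ℕ → Set X := fun n => ⋂ m ∈ Set.Iic n, toMeasurable μ (A m) with hT_def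
  have hTmeas : ∀ n, MeasurableSet (T n) := fun n =>
    MeasurableSet.biInter (Set.to_countable _) fun m _ => measurableSet_toMeasurable μ _
  have hTA : ∀ n, μ (T n) ≤ μ (A n) := fun n =>
    ((measure_mono (Set.biInter_subset_of_mem (Set.mem_Iic.2 le_rfl))).trans
      (measure_toMeasurable _).le)
  have hμA : ∀ n : ℕ, μ (A n) ≤ ENNReal.ofReal ρ₁ * μ (Q i) *
      (ENNReal.ofReal (Real.exp (-(ρ₂ * 2^n))) + ENNReal.ofReal (((2:ℝ)^n) ^ (-q₁))) :=
    fun n => hJN i ((2:ℝ)^n) (by positivity)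
  -- the set of points in all hulls is null
  have hInull : μ (⋂ n, T n) = 0 := by
    have hb : ∀ n : ℕ, μ (⋂ k, T k) ≤ ENNReal.ofReal ρ₁ * μ (Q i) *
        (ENNReal.ofReal (Real.exp (-(ρ₂ * 2^n))) + ENNReal.ofReal (((2:ℝ)^n) ^ (-q₁))) :=
      fun n => ((measure_mono (Set.iInter_subset _ n)).trans (hTA n)).trans (hμA n)
    have h2 : Tendsto (fun n : ℕ => ((2:ℝ)^n)) atTop atTop :=
      tendsto_pow_atTop_atTop_of_one_lt one_lt_two
    have hexp : Tendsto (fun n : ℕ => Real.exp (-(ρ₂ * 2^n))) atTop (𝓝 0) :=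
      Real.tendsto_exp_neg_atTop_nhds_zero.comp (h2.const_mul_atTop hρ₂)
    have hrp : Tendsto (fun n : ℕ => ((2:ℝ)^n) ^ (-q₁)) atTop (𝓝 0) :=
      (tendsto_rpow_neg_atTop hq₁pos).comp h2
    have hadd : Tendsto (fun n : ℕ => ENNReal.ofReal (Real.exp (-(ρ₂ * 2^n)))
        + ENNReal.ofReal (((2:ℝ)^n) ^ (-q₁))) atTop (𝓝 0) := by
      have := (ENNReal.tendsto_ofReal hexp).add (ENNReal.tendsto_ofReal hrp)
      simpa using this
    have hfin : ENNReal.ofReal ρ₁ * μ (Q i) ≠ ⊤ :=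
      ENNReal.mul_ne_top ENNReal.ofReal_ne_top hQtop.ne
    have htend : Tendsto (fun n : ℕ => ENNReal.ofReal ρ₁ * μ (Q i) *
        (ENNReal.ofReal (Real.exp (-(ρ₂ * 2^n))) + ENNReal.ofReal (((2:ℝ)^n) ^ (-q₁))))
        atTop (𝓝 0) := by
      have := ENNReal.Tendsto.const_mul hadd (Or.inr hfin)
      simpa using this
    exact le_antisymm (ge_of_tendsto' htend hb) zero_le
  -- rewriting the integrand
  have hfeq : ∀ x : X, (‖g i x‖₊ : ℝ≥0∞) ^ q = ENNReal.ofReal (|g i x| ^ q) := fun x => by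
    rw [← enorm_eq_nnnorm, Real.enorm_eq_ofReal_abs, ENNReal.ofReal_rpow_of_nonneg (abs_nonneg _) hq.le]
  -- escaping a hull gives a pointwise bound source
  have hnotA : ∀ (n : ℕ) (x : X), x ∉ T n → ∃ m ≤ n, x ∉ A m := by
    intro n x hxT
    rw [hT_def] at hxT
    simp only [Set.mem_iInter, Set.mem_Iic, not_forall] at hxT
    obtain ⟨m, hm, hmem⟩ := hxT
    exact ⟨m, hm, fun hA => hmem (subset_toMeasurable μ _ hA)⟩
  -- covering of Q i
  have hcover : Q i ⊆ (Q i \ T 0) ∪ ((⋂ n, T n) ∪ ⋃ n, ((T n \ T (n+1)) ∩ Q i)) := by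
    intro x hx
    by_cases h0 : x ∈ T 0
    · by_cases hall : ∀ n, x ∈ T n
      · exact Or.inr (Or.inl (Set.mem_iInter.2 hall))
      · push_neg at hall
        have hfind := Nat.find_spec hall
        have hne : Nat.find hall ≠ 0 := fun h => (h ▸ hfind) h0
        obtain ⟨k, hk⟩ : ∃ k, Nat.find hall = k + 1 := ⟨Nat.find hall - 1, by omega⟩
        have hxk : x ∈ T k := by
          by_contra hc
          exact Nat.find_min hall (by omega) hc
        exact Or.inr (Or.inr (Set.mem_iUnion.2 ⟨k, ⟨⟨hxk, hk ▸ hfind⟩, hx⟩⟩))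
    · exact Or.inl ⟨hx, h0⟩
  -- bound on the bounded piece
  have hp0 : ∫⁻ x in Q i \ T 0, (‖g i x‖₊ : ℝ≥0∞) ^ q ∂μ
      ≤ ENNReal.ofReal (N ^ q) * μ (Q i) := by
    have hb : ∀ x ∈ Q i \ T 0, (‖g i x‖₊ : ℝ≥0∞) ^ q ≤ ENNReal.ofReal (N ^ q) := by
      intro x hx
      obtain ⟨m, hm, hmA⟩ := hnotA 0 x hx.2
      have hm0 : m = 0 := Nat.le_zero.1 hm
      subst hm0
      have hgle : |g i x| ≤ N := by
        by_contra hc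
        push_neg at hc
        exact hmA ⟨hx.1, by simpa using hc⟩
      rw [hfeq]
      exact ENNReal.ofReal_le_ofReal (Real.rpow_le_rpow (abs_nonneg _) hgle hq.le)
    calc ∫⁻ x in Q i \ T 0, (‖g i x‖₊ : ℝ≥0∞) ^ q ∂μ
        ≤ ∫⁻ _ in Q i \ T 0, ENNReal.ofReal (N^q) ∂μ :=
          setLIntegral_mono' ((hQm i).diff (hTmeas 0)) hb
      _ = ENNReal.ofReal (N^q) * μ (Q i \ T 0) := setLIntegral_const _ _
      _ ≤ ENNReal.ofReal (N^q) * μ (Q i) :=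
          mul_le_mul_right (measure_mono Set.diff_subset) _
  -- bound on each annulus
  have hpn : ∀ n : ℕ, ∫⁻ x in (T n \ T (n+1)) ∩ Q i, (‖g i x‖₊ : ℝ≥0∞) ^ q ∂μ
      ≤ ENNReal.ofReal (N^q * ρ₁) * ENNReal.ofReal (jnA ρ₂ q q₁ n) * μ (Q i) := by
    intro n
    have hb : ∀ x ∈ (T n \ T (n+1)) ∩ Q i,
        (‖g i x‖₊ : ℝ≥0∞) ^ q ≤ ENNReal.ofReal (((2:ℝ)^(n+1) * N) ^ q) := by
      intro x hx
      obtain ⟨m, hm, hmA⟩ := hnotA (n+1) x hx.1.2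
      have hgle : |g i x| ≤ (2:ℝ)^(n+1) * N := by
        have h1 : |g i x| ≤ (2:ℝ)^m * N := by
          by_contra hc
          push_neg at hc
          exact hmA ⟨hx.2, hc⟩
        refine h1.trans (mul_le_mul_of_nonneg_right ?_ hN)
        exact pow_le_pow_right₀ (by norm_num) hm
      rw [hfeq]
      exact ENNReal.ofReal_le_ofReal (Real.rpow_le_rpow (abs_nonneg _) hgle hq.le)
    have hmeasset : MeasurableSet ((T n \ T (n+1)) ∩ Q i) :=
      ((hTmeas n).diff (hTmeas (n+1))).inter (hQm i)
    have hmu : μ ((T n \ T (n+1)) ∩ Q i) ≤ μ (A n) :=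
      (measure_mono (Set.inter_subset_left.trans Set.diff_subset)).trans (hTA n)
    calc ∫⁻ x in (T n \ T (n+1)) ∩ Q i, (‖g i x‖₊ : ℝ≥0∞) ^ q ∂μ
        ≤ ∫⁻ _ in (T n \ T (n+1)) ∩ Q i, ENNReal.ofReal (((2:ℝ)^(n+1) * N) ^ q) ∂μ :=
          setLIntegral_mono' hmeasset hb
      _ = ENNReal.ofReal (((2:ℝ)^(n+1) * N) ^ q) * μ ((T n \ T (n+1)) ∩ Q i) :=
          setLIntegral_const _ _
      _ ≤ ENNReal.ofReal (((2:ℝ)^(n+1) * N) ^ q) * (ENNReal.ofReal ρ₁ * μ (Q i) *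
            (ENNReal.ofReal (Real.exp (-(ρ₂ * 2^n))) + ENNReal.ofReal (((2:ℝ)^n) ^ (-q₁)))) :=
          mul_le_mul_right (hmu.trans (hμA n)) _
      _ = ENNReal.ofReal (N^q * ρ₁) * ENNReal.ofReal (jnA ρ₂ q q₁ n) * μ (Q i) := by
          have e1 : ENNReal.ofReal (((2:ℝ)^(n+1) * N) ^ q)
              = ENNReal.ofReal (((2:ℝ)^(n+1))^q) * ENNReal.ofReal (N^q) := by
            rw [Real.mul_rpow (by positivity) hN, ENNReal.ofReal_mul (by positivity)]
          have e2 : ENNReal.ofReal (N^q * ρ₁)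
              = ENNReal.ofReal (N^q) * ENNReal.ofReal ρ₁ :=
            ENNReal.ofReal_mul (by positivity)
          have e3 : ENNReal.ofReal (jnA ρ₂ q q₁ n)
              = ENNReal.ofReal (((2:ℝ)^(n+1))^q) *
                (ENNReal.ofReal (Real.exp (-(ρ₂ * 2^n))) + ENNReal.ofReal (((2:ℝ)^n) ^ (-q₁))) := by
            unfold jnA
            rw [ENNReal.ofReal_mul (by positivity), ENNReal.ofReal_add (by positivity) (by positivity)]
          rw [e1, e2, e3]
          ring
  -- assembling
  have hUle : ∀ (s t : Set X), ∫⁻ x in s ∪ t, (‖g i x‖₊ : ℝ≥0∞) ^ q ∂μ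
      ≤ ∫⁻ x in s, (‖g i x‖₊ : ℝ≥0∞) ^ q ∂μ + ∫⁻ x in t, (‖g i x‖₊ : ℝ≥0∞) ^ q ∂μ := by
    intro s t
    rw [← lintegral_add_measure]
    exact lintegral_mono' (Measure.restrict_union_le s t) le_rfl
  have hmain : ∫⁻ x in Q i, (‖g i x‖₊ : ℝ≥0∞) ^ q ∂μ
      ≤ ENNReal.ofReal ((1 + ρ₁ * S) * N^q) * μ (Q i) := by
    calc ∫⁻ x in Q i, (‖g i x‖₊ : ℝ≥0∞) ^ q ∂μ
        ≤ ∫⁻ x in (Q i \ T 0) ∪ ((⋂ n, T n) ∪ ⋃ n, ((T n \ T (n+1)) ∩ Q i)),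
            (‖g i x‖₊ : ℝ≥0∞) ^ q ∂μ := lintegral_mono_set hcover
      _ ≤ ∫⁻ x in Q i \ T 0, (‖g i x‖₊ : ℝ≥0∞) ^ q ∂μ
            + (∫⁻ x in ⋂ n, T n, (‖g i x‖₊ : ℝ≥0∞) ^ q ∂μ
              + ∫⁻ x in ⋃ n, ((T n \ T (n+1)) ∩ Q i), (‖g i x‖₊ : ℝ≥0∞) ^ q ∂μ) :=
          (hUle _ _).trans (add_le_add_right (hUle _ _) _)
      _ ≤ ENNReal.ofReal (N^q) * μ (Q i)
            + (0 + ∑' n, (ENNReal.ofReal (N^q * ρ₁) * ENNReal.ofReal (jnA ρ₂ q q₁ n) * μ (Q i))) := by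
          refine add_le_add hp0 (add_le_add ?_ ?_)
          · rw [setLIntegral_measure_zero _ _ hInull]
          · exact (lintegral_iUnion_le _ _).trans (ENNReal.tsum_le_tsum hpn)
      _ = ENNReal.ofReal ((1 + ρ₁ * S) * N^q) * μ (Q i) := by
          rw [zero_add, ENNReal.tsum_mul_right, ENNReal.tsum_mul_left,
            ← ENNReal.ofReal_tsum_of_nonneg ha0 hsum, ← hS_def]
          have e2 : ENNReal.ofReal (N^q * ρ₁) * ENNReal.ofReal S
              = ENNReal.ofReal (N^q * ρ₁ * S) := (ENNReal.ofReal_mul (by positivity)).symm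
          rw [e2, ← add_mul, ← ENNReal.ofReal_add (by positivity) (by positivity)]
          congr 2
          ring
  -- final computation
  calc ((μ (Q i))⁻¹ * ∫⁻ x in Q i, (‖g i x‖₊ : ℝ≥0∞) ^ q ∂μ) ^ (1/q)
      ≤ ((μ (Q i))⁻¹ * (ENNReal.ofReal ((1 + ρ₁ * S) * N^q) * μ (Q i))) ^ (1/q) :=
        ENNReal.rpow_le_rpow (mul_le_mul_right hmain _) (by positivity)
    _ = (ENNReal.ofReal ((1 + ρ₁ * S) * N^q)) ^ (1/q) := by
        rw [mul_comm (ENNReal.ofReal _) (μ (Q i)), ← mul_assoc,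
          ENNReal.inv_mul_cancel hQ0.ne' hQtop.ne, one_mul]
    _ = ENNReal.ofReal ((1 + ρ₁ * S) ^ (1/q) * N) := by
        rw [ENNReal.ofReal_rpow_of_nonneg (by positivity) (by positivity),
          Real.mul_rpow hK.le (Real.rpow_nonneg hN q), ← Real.rpow_mul hN,
          mul_one_div_cancel hq.ne', Real.rpow_one]
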